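/- Let 0 < γ < β and x > 0. Then sup{ m − x·m·(−1 + β/(γ − m)) : γ − √(βγ) < m < γ } = (√(γ(1 + x)) − √(βx))². -/

import Mathlib

/-- For `0 < γ < β` and `x > 0`, the rate function of the clock of the
pssMp associated with `ξ_t = -t + Pois(β,γ)_t` is
`sup {m - x·m·(-1 + β/(γ-m)) : γ - √(βγ) < m < γ} = (√(γ(1+x)) - √(βx))²`. -/
theorem poisson_negative_drift_clock_rate_function
    (β γ x : ℝ) (hγ : 0 < γ) (hγβ : γ < β) (hx : 0 < x) :
    sSup {y : ℝ | ∃ m ∈ Set.Ioo (γ - Real.sqrt (β * γ)) γ,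
        y = m - x * (m * (-1 + β / (γ - m)))}
      = (Real.sqrt (γ * (1 + x)) - Real.sqrt (β * x)) ^ 2 := by
  set s := Real.sqrt (γ * (1 + x)) with hs
  set t := Real.sqrt (β * x) with ht
  have hβ : 0 < β := hγ.trans hγβ
  have h1x : 0 < 1 + x := by linarith
  have hs2 : s ^ 2 = γ * (1 + x) := Real.sq_sqrt (by positivity)
  have ht2 : t ^ 2 = β * x := Real.sq_sqrt (by positivity)
  have hspos : 0 < s := Real.sqrt_pos.2 (by positivity)
  have htpos : 0 < t := Real.sqrt_pos.2 (by positivity)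
  set u : ℝ := s * t / (1 + x) with hu
  have hupos : 0 < u := by positivity
  have hu2 : u ^ 2 = x * β * γ / (1 + x) := by
    rw [hu, div_pow, mul_pow, hs2, ht2]; field_simp
  have husq : u < Real.sqrt (β * γ) := by
    have h2 : u ^ 2 < β * γ := by
      rw [hu2, div_lt_iff₀ h1x]; nlinarith
    exact (Real.lt_sqrt hupos.le).2 h2
  have hmem : (s - t) ^ 2 ∈ {y : ℝ | ∃ m ∈ Set.Ioo (γ - Real.sqrt (β * γ)) γ,
        y = m - x * (m * (-1 + β / (γ - m)))} := by
    refine ⟨γ - u, ⟨by linarith, by linarith⟩, ?_⟩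
    rw [show γ - (γ - u) = u by ring]
    have hune : (1 + x) ≠ 0 := h1x.ne'
    rw [hu]
    have hst : s * t / (1 + x) ≠ 0 := by positivity
    field_simp
    linear_combination ((1+x)*(s*t - t^2))*hs2 - ((1+x)*(γ*(1+x) - s*t))*ht2
  have hub : ∀ y ∈ {y : ℝ | ∃ m ∈ Set.Ioo (γ - Real.sqrt (β * γ)) γ,
        y = m - x * (m * (-1 + β / (γ - m)))}, y ≤ (s - t) ^ 2 := by
    rintro y ⟨m, ⟨hm1, hm2⟩, rfl⟩
    have hv : 0 < γ - m := by linarith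
    have key : ((s-t)^2 - (m - x*(m*(-1+β/(γ-m))))) * ((γ-m)*(1+x))
        = ((1+x)*(γ-m) - s*t)^2 := by
      have h0 : γ - m ≠ 0 := hv.ne'
      field_simp
      linear_combination (((1+x)*(γ-m) - t^2))*hs2
        + (((1+x)*(γ-m) - γ*(1+x)))*ht2
    nlinarith [key, sq_nonneg ((1+x)*(γ-m) - s*t), mul_pos hv h1x]
  exact IsLUB.csSup_eq ⟨hub, fun b hb => hb hmem⟩ ⟨_, hmem⟩
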